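/- Let μ̃_P be the Bernoulli measure with cylinder weights Π_{l=1}^n (p_{i_l j_l}/p_{i_l})·(a_{i_l j_l k_l}^{t(P)}/Σ_k a_{i_l j_l k}^{t(P)}). Then for P-a.e. ω (and p-a.e. i), log μ̃_P(B_n(ω)) / Σ_{l=1}^n log b_{i_l j_l} → λ(P) + t(P), where λ(P) = (Σ_{i,j} p_{ij} log p_{ij} − Σ_i p_i log p_i)/(Σ_{i,j} p_{ij} log b_{ij}) and t(P) is the unique real in [0,1] with Σ_{i,j} p_{ij} log(Σ_k a_{ijk}^{t(P)}) = 0. -/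

import Mathlib

open MeasureTheory

abbrev Alph (m : ℕ) (mi : Fin m → ℕ) (mij : (i : Fin m) → Fin (mi i) → ℕ) : Type :=
  Σ i : Fin m, Σ j : Fin (mi i), Fin (mij i j)

section Helpers

open Filter Finset ProbabilityTheory Topology

instance sigma_discrete_aux {α : Type*} {β : α → Type*} [m : ∀ a, MeasurableSpace (β a)]
    [∀ a, DiscreteMeasurableSpace (β a)] : DiscreteMeasurableSpace (Σ a, β a) := by
  constructor
  intro s
  suffices h : MeasurableSet[⨅ a, (m a).map (Sigma.mk a)] s from h
  rw [MeasurableSpace.measurableSet_iInf]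
  intro a
  exact (MeasurableSet.of_discrete : MeasurableSet (Sigma.mk a ⁻¹' s))

variable {A : Type*} [Fintype A] [DecidableEq A] [MeasurableSpace A]
  [DiscreteMeasurableSpace A] [Nonempty A]

variable (μ : Measure (ℕ → A)) (w : A → ℝ)

theorem cylJ (μ : Measure (ℕ → A)) (w : A → ℝ) (hw : ∀ u, 0 ≤ w u)
    (hcyl : ∀ (n : ℕ) (x : ℕ → A), μ {x' | ∀ l < n, x' l = x l} =
      ENNReal.ofReal (∏ l ∈ Finset.range n, w (x l)))
    (n : ℕ) (T : ℕ → Finset A) :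
    μ {x | ∀ l < n, x l ∈ T l} =
      ENNReal.ofReal (∏ l ∈ Finset.range n, ∑ u ∈ T l, w u) := by
  classical
  set S : Finset (Fin n → A) := Finset.univ.filter (fun v => ∀ l : Fin n, v l ∈ T l) with hS
  have hset : {x : ℕ → A | ∀ l < n, x l ∈ T l} = ⋃ v ∈ S, {x | ∀ l : Fin n, x (l : ℕ) = v l} := by
    ext x
    simp only [Set.mem_setOf_eq, Set.mem_iUnion, hS, Finset.mem_filter, Finset.mem_univ, true_and]
    constructor
    · intro h
      exact ⟨fun l : Fin n => x l, fun l => h l l.isLt, fun l => rfl⟩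
    · rintro ⟨v, hv, hxv⟩ l hl
      rw [show x l = v ⟨l, hl⟩ from hxv ⟨l, hl⟩]
      exact hv ⟨l, hl⟩
  have hmeas : ∀ v : Fin n → A, MeasurableSet {x : ℕ → A | ∀ l : Fin n, x (l : ℕ) = v l} := by
    intro v
    have : {x : ℕ → A | ∀ l : Fin n, x (l : ℕ) = v l} =
        ⋂ l : Fin n, (fun x : ℕ → A => x (l : ℕ)) ⁻¹' {v l} := by
      ext x; simp
    rw [this]
    exact MeasurableSet.iInter fun l => measurable_pi_apply _ (measurableSet_singleton _)
  have hdisj : (S : Set (Fin n → A)).PairwiseDisjoint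
      (fun v => {x : ℕ → A | ∀ l : Fin n, x (l : ℕ) = v l}) := by
    intro v _ v' _ hvv'
    refine Set.disjoint_left.2 fun x hx hx' => hvv' ?_
    funext l
    rw [← hx l, ← hx' l]
  have hcylv : ∀ v : Fin n → A,
      μ {x : ℕ → A | ∀ l : Fin n, x (l : ℕ) = v l} =
        ENNReal.ofReal (∏ l : Fin n, w (v l)) := by
    intro v
    set y : ℕ → A := fun l => if h : l < n then v ⟨l, h⟩ else Classical.arbitrary A with hy
    have h1 : {x : ℕ → A | ∀ l : Fin n, x (l : ℕ) = v l} = {x' | ∀ l < n, x' l = y l} := by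
      ext x
      simp only [Set.mem_setOf_eq, hy]
      constructor
      · intro h l hl; rw [dif_pos hl]; exact h ⟨l, hl⟩
      · intro h l; have := h l l.isLt; rwa [dif_pos l.isLt] at this
    rw [h1, hcyl n y]
    congr 1
    rw [← Fin.prod_univ_eq_prod_range (fun l => w (y l)) n]
    refine Finset.prod_congr rfl fun l _ => ?_
    simp only [hy, dif_pos l.isLt]
  rw [hset, measure_biUnion_finset hdisj fun v _ => hmeas v]
  simp_rw [hcylv]
  rw [← ENNReal.ofReal_sum_of_nonneg fun v _ => Finset.prod_nonneg fun l _ => hw _]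
  congr 1
  rw [hS, Finset.sum_filter]
  have hterm : ∀ v : Fin n → A,
      (if (∀ l : Fin n, v l ∈ T l) then ∏ l, w (v l) else 0) =
        ∏ l : Fin n, (if v l ∈ T (l : ℕ) then w (v l) else 0) := by
    intro v
    split_ifs with h
    · exact Finset.prod_congr rfl fun l _ => (if_pos (h l)).symm
    · push_neg at h
      obtain ⟨l₀, hl₀⟩ := h
      rw [eq_comm]
      apply Finset.prod_eq_zero (Finset.mem_univ l₀)
      exact if_neg hl₀
  simp_rw [hterm]
  have := Finset.prod_univ_sum (fun _ : Fin n => (Finset.univ : Finset A))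
    (fun l u => if u ∈ T (l : ℕ) then w u else 0)
  rw [Fintype.piFinset_univ] at this
  rw [← this, ← Fin.prod_univ_eq_prod_range (fun l => ∑ u ∈ T l, w u) n]
  refine Finset.prod_congr rfl fun l _ => ?_
  rw [Finset.sum_ite_mem, Finset.univ_inter]

section consequences

variable (hw : ∀ u, 0 ≤ w u)
    (hcyl : ∀ (n : ℕ) (x : ℕ → A), μ {x' | ∀ l < n, x' l = x l} =
      ENNReal.ofReal (∏ l ∈ Finset.range n, w (x l)))
include hw hcyl

theorem sum1 : ∑ u, w u = 1 := by
  classical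
  have h0 : μ Set.univ = 1 := by
    have := hcyl 0 (fun _ => Classical.arbitrary A)
    simpa using this
  have h1 := cylJ μ w hw hcyl 1 (fun _ => Finset.univ)
  have huniv : {x : ℕ → A | ∀ l < 1, x l ∈ (Finset.univ : Finset A)} = Set.univ := by
    ext x; simp
  rw [huniv, h0] at h1
  have := h1.symm
  rw [ENNReal.ofReal_eq_one] at this
  simpa using this

theorem dist1 (l₀ : ℕ) (s : Finset A) :
    μ {x | x l₀ ∈ s} = ENNReal.ofReal (∑ u ∈ s, w u) := by
  classical
  have h := cylJ μ w hw hcyl (l₀ + 1) (fun l => if l = l₀ then s else Finset.univ)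
  have hset : {x : ℕ → A | ∀ l < l₀ + 1, x l ∈ (if l = l₀ then s else Finset.univ)} =
      {x | x l₀ ∈ s} := by
    ext x
    simp only [Set.mem_setOf_eq]
    constructor
    · intro h'
      have := h' l₀ (Nat.lt_succ_self _)
      rwa [if_pos rfl] at this
    · intro hx l hl
      by_cases hll : l = l₀
      · rwa [if_pos hll, hll]
      · rw [if_neg hll]; exact Finset.mem_univ _
  rw [hset] at h
  rw [h]
  congr 1
  rw [Finset.prod_eq_single_of_mem l₀ (Finset.self_mem_range_succ l₀)]
  · rw [if_pos rfl]
  · intro l _ hll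
    rw [if_neg hll]
    exact sum1 μ w hw hcyl

theorem dist2 (l₁ l₂ : ℕ) (hl : l₁ ≠ l₂) (s t : Finset A) :
    μ {x | x l₁ ∈ s ∧ x l₂ ∈ t} =
      ENNReal.ofReal ((∑ u ∈ s, w u) * (∑ u ∈ t, w u)) := by
  classical
  set n := max l₁ l₂ + 1 with hn
  have h := cylJ μ w hw hcyl n (fun l => if l = l₁ then s else if l = l₂ then t else Finset.univ)
  have hset : {x : ℕ → A | ∀ l < n, x l ∈ (if l = l₁ then s else if l = l₂ then t else Finset.univ)} =
      {x | x l₁ ∈ s ∧ x l₂ ∈ t} := by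
    ext x
    simp only [Set.mem_setOf_eq]
    constructor
    · intro h'
      constructor
      · have := h' l₁ (by omega); rwa [if_pos rfl] at this
      · have := h' l₂ (by omega); rwa [if_neg (Ne.symm hl), if_pos rfl] at this
    · rintro ⟨h1, h2⟩ l _
      by_cases e1 : l = l₁
      · rwa [if_pos e1, e1]
      by_cases e2 : l = l₂
      · rwa [if_neg e1, if_pos e2, e2]
      · rw [if_neg e1, if_neg e2]; exact Finset.mem_univ _
  rw [hset] at h
  rw [h]
  congr 1
  have hsub : ({l₁, l₂} : Finset ℕ) ⊆ Finset.range n := by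
    intro l hl'
    simp only [Finset.mem_insert, Finset.mem_singleton] at hl'
    rcases hl' with rfl | rfl <;> simp [hn] <;> omega
  rw [← Finset.prod_subset hsub (fun l _ hl' => ?_), Finset.prod_pair hl]
  · rw [if_pos rfl, if_neg (Ne.symm hl), if_pos rfl]
  · simp only [Finset.mem_insert, Finset.mem_singleton, not_or] at hl'
    rw [if_neg hl'.1, if_neg hl'.2]
    exact sum1 μ w hw hcyl

theorem mapX (l : ℕ) :
    μ.map (fun x : ℕ → A => x l) = ∑ u : A, ENNReal.ofReal (w u) • Measure.dirac u := by
  classical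
  ext s hs
  rw [Measure.map_apply (measurable_pi_apply l) hs]
  have h1 : (fun x : ℕ → A => x l) ⁻¹' s = {x | x l ∈ s.toFinite.toFinset} := by
    ext x; simp [Set.Finite.mem_toFinset]
  rw [h1, dist1 μ w hw hcyl l, ENNReal.ofReal_sum_of_nonneg (fun u _ => hw u)]
  rw [Measure.coe_finset_sum, Finset.sum_apply]
  simp only [Measure.smul_apply, Measure.dirac_apply' _ hs, smul_eq_mul]
  have h2 : ∀ u : A, ENNReal.ofReal (w u) * s.indicator 1 u =
      if u ∈ s.toFinite.toFinset then ENNReal.ofReal (w u) else 0 := by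
    intro u
    rw [Set.indicator_apply]
    by_cases hu : u ∈ s
    · rw [if_pos (Set.Finite.mem_toFinset _ |>.2 hu), if_pos hu, Pi.one_apply, mul_one]
    · rw [if_neg (fun h => hu ((Set.Finite.mem_toFinset _).1 h)), if_neg hu, mul_zero]
  simp_rw [h2, Finset.sum_ite_mem, Finset.univ_inter]

theorem identX (l : ℕ) :
    ProbabilityTheory.IdentDistrib (fun x : ℕ → A => x l) (fun x : ℕ → A => x 0) μ μ :=
  ⟨(measurable_pi_apply l).aemeasurable, (measurable_pi_apply 0).aemeasurable, by
    rw [mapX μ w hw hcyl l, mapX μ w hw hcyl 0]⟩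

theorem indepX (l l' : ℕ) (hll' : l ≠ l') :
    ProbabilityTheory.IndepFun (fun x : ℕ → A => x l) (fun x : ℕ → A => x l') μ := by
  classical
  rw [ProbabilityTheory.indepFun_iff_measure_inter_preimage_eq_mul]
  intro s t hs ht
  have h1 : (fun x : ℕ → A => x l) ⁻¹' s ∩ (fun x : ℕ → A => x l') ⁻¹' t =
      {x | x l ∈ s.toFinite.toFinset ∧ x l' ∈ t.toFinite.toFinset} := by
    ext x
    simp [Set.Finite.mem_toFinset]
  have h2 : (fun x : ℕ → A => x l) ⁻¹' s = {x | x l ∈ s.toFinite.toFinset} := by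
    ext x; simp [Set.Finite.mem_toFinset]
  have h3 : (fun x : ℕ → A => x l') ⁻¹' t = {x | x l' ∈ t.toFinite.toFinset} := by
    ext x; simp [Set.Finite.mem_toFinset]
  rw [h1, h2, h3, dist2 μ w hw hcyl l l' hll', dist1 μ w hw hcyl, dist1 μ w hw hcyl,
    ENNReal.ofReal_mul (Finset.sum_nonneg fun u _ => hw u)]

theorem intX (φ : A → ℝ) :
    Integrable (fun x : ℕ → A => φ (x 0)) μ ∧
      ∫ x, φ (x 0) ∂μ = ∑ u, w u * φ u := by
  classical
  haveI : IsProbabilityMeasure (μ.map (fun x : ℕ → A => x 0)) := by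
    rw [mapX μ w hw hcyl 0]
    constructor
    rw [Measure.coe_finset_sum, Finset.sum_apply]
    simp only [Measure.smul_apply, Measure.dirac_apply' _ MeasurableSet.univ, smul_eq_mul,
      Set.indicator_univ, Pi.one_apply, mul_one]
    rw [← ENNReal.ofReal_sum_of_nonneg (fun u _ => hw u), sum1 μ w hw hcyl,
      ENNReal.ofReal_one]
  have hφm : Measurable φ := Measurable.of_discrete
  have hmap : Integrable φ (μ.map (fun x : ℕ → A => x 0)) := .of_finite
  constructor
  · exact (integrable_map_measure hφm.aestronglyMeasurable
      (measurable_pi_apply 0).aemeasurable).1 hmap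
  · rw [← integral_map (measurable_pi_apply 0).aemeasurable hφm.aestronglyMeasurable,
      mapX μ w hw hcyl 0, integral_finset_sum_measure (fun u _ => ?_)]
    · refine Finset.sum_congr rfl fun u _ => ?_
      rw [integral_smul_measure, integral_dirac, ENNReal.toReal_ofReal (hw u), smul_eq_mul]
    · haveI : IsFiniteMeasure (ENNReal.ofReal (w u) • (Measure.dirac u : Measure A)) := by
        constructor
        simp only [Measure.smul_apply, smul_eq_mul]
        exact ENNReal.mul_lt_top ENNReal.ofReal_lt_top (by simp)
      exact .of_finite

theorem sllnX (φ : A → ℝ) :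
    ∀ᵐ x ∂μ, Tendsto (fun n : ℕ => (∑ l ∈ Finset.range n, φ (x l)) / n) atTop
      (𝓝 (∑ u, w u * φ u)) := by
  have hφm : Measurable φ := Measurable.of_discrete
  have h := ProbabilityTheory.strong_law_ae_real (fun l (x : ℕ → A) => φ (x l))
    ((intX μ w hw hcyl φ).1)
    (fun i j hij => (indepX μ w hw hcyl i j hij).comp hφm hφm)
    (fun i => (identX μ w hw hcyl i).comp hφm)
  rw [show μ[fun x : ℕ → A => φ (x 0)] = ∑ u, w u * φ u from (intX μ w hw hcyl φ).2] at h
  exact h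

end consequences

theorem det (Sf Sa Sb Sg : ℕ → ℝ) (K : ℕ → ℕ) (N : ℕ) (F A H G : ℝ)
    (hA : A < 0) (hH : H < 0)
    (hf : Tendsto (fun n : ℕ => Sf n / n) atTop (𝓝 F))
    (ha : Tendsto (fun n : ℕ => Sa n / n) atTop (𝓝 A))
    (hb : Tendsto (fun n : ℕ => Sb n / n) atTop (𝓝 H))
    (hg : Tendsto (fun n : ℕ => Sg n / n) atTop (𝓝 G))
    (hK1 : ∀ n ≥ N, 1 ≤ K n) (hK2 : ∀ n ≥ N, Sb n ≤ Sa (K n))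
    (hK3 : ∀ n ≥ N, ∀ k, 1 ≤ k → Sb n ≤ Sa k → k ≤ K n) :
    Tendsto (fun n : ℕ => (Sf n + Sg (K n)) / Sb n) atTop (𝓝 ((F + G * (H / A)) / H)) := by
  have hSbbot : Tendsto Sb atTop atBot := by
    have h1 : Tendsto (fun n : ℕ => (Sb n / n) * n) atTop atBot :=
      Tendsto.neg_mul_atTop hH hb tendsto_natCast_atTop_atTop
    refine h1.congr' ?_
    filter_upwards [eventually_ge_atTop 1] with n hn
    have : (n : ℝ) ≠ 0 := by positivity
    field_simp
  have hKtop : Tendsto K atTop atTop := by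
    rw [tendsto_atTop]
    intro c
    filter_upwards [eventually_ge_atTop N,
      hSbbot.eventually (eventually_le_atBot (Sa (max c 1)))] with n hn hsb
    calc c ≤ max c 1 := le_max_left _ _
    _ ≤ K n := hK3 n hn (max c 1) (le_max_right _ _) hsb
  have hKtop1 : Tendsto (fun n => K n + 1) atTop atTop :=
    tendsto_atTop_mono (fun n => Nat.le_succ _) hKtop
  have haK : Tendsto (fun n : ℕ => Sa (K n) / (K n : ℝ)) atTop (𝓝 A) := ha.comp hKtop
  have haK1 : Tendsto (fun n : ℕ => Sa (K n + 1) / ((K n : ℝ) + 1)) atTop (𝓝 A) := by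
    have h := ha.comp hKtop1
    refine h.congr fun n => ?_
    simp only [Function.comp_apply]
    push_cast
    ring_nf
  have hgK : Tendsto (fun n : ℕ => Sg (K n) / (K n : ℝ)) atTop (𝓝 G) := hg.comp hKtop
  have hr : Tendsto (fun n : ℕ => (K n : ℝ) / n) atTop (𝓝 (H / A)) := by
    have hlow : Tendsto
        (fun n : ℕ => (Sb n / n) / (Sa (K n + 1) / ((K n : ℝ) + 1)) - 1 / n) atTop
        (𝓝 (H / A)) := by
      have := (hb.div haK1 hA.ne).sub tendsto_one_div_atTop_nhds_zero_nat
      rwa [sub_zero] at this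
    have hup : Tendsto (fun n : ℕ => (Sb n / n) / (Sa (K n) / (K n : ℝ))) atTop
        (𝓝 (H / A)) := hb.div haK hA.ne
    refine tendsto_of_tendsto_of_tendsto_of_le_of_le' hlow hup ?_ ?_
    · filter_upwards [eventually_ge_atTop N, eventually_ge_atTop 1,
        haK1.eventually (eventually_lt_nhds hA)] with n hn hn1 hneg'
      have hnpos : (0 : ℝ) < (n : ℝ) := by positivity
      have hKn1 : (0 : ℝ) < (K n : ℝ) + 1 := by positivity
      have h3 : Sa (K n + 1) ≤ Sb n := by
        by_contra hcon
        push_neg at hcon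
        have := hK3 n hn (K n + 1) (by omega) (le_of_lt hcon)
        omega
      have h6 : (Sb n / n) / (Sa (K n + 1) / ((K n : ℝ) + 1)) ≤ ((K n : ℝ) + 1) / n := by
        rw [div_le_iff_of_neg hneg']
        have e2 : ((K n : ℝ) + 1) / n * (Sa (K n + 1) / ((K n : ℝ) + 1)) =
            Sa (K n + 1) / n := by
          field_simp
        rw [e2]
        gcongr
      have e3 : ((K n : ℝ) + 1) / n = (K n : ℝ) / n + 1 / n := add_div _ _ _
      linarith
    · filter_upwards [eventually_ge_atTop N, eventually_ge_atTop 1,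
        haK.eventually (eventually_lt_nhds hA)] with n hn hn1 hneg
      have hnpos : (0 : ℝ) < (n : ℝ) := by positivity
      have hKpos : (0 : ℝ) < (K n : ℝ) := by
        have := hK1 n hn
        positivity
      rw [le_div_iff_of_neg hneg]
      have e1 : (K n : ℝ) / n * (Sa (K n) / (K n : ℝ)) = Sa (K n) / n := by
        field_simp
      calc Sb n / n ≤ Sa (K n) / n := by gcongr; exact hK2 n hn
      _ = (K n : ℝ) / n * (Sa (K n) / (K n : ℝ)) := e1.symm
  -- final assembly
  have hnum : Tendsto (fun n : ℕ => Sf n / n + (Sg (K n) / (K n : ℝ)) * ((K n : ℝ) / n))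
      atTop (𝓝 (F + G * (H / A))) := hf.add (hgK.mul hr)
  have hmain := hnum.div hb hH.ne
  refine hmain.congr' ?_
  have hSbneg : ∀ᶠ n in atTop, Sb n < 0 := hSbbot.eventually (eventually_lt_atBot 0)
  filter_upwards [eventually_ge_atTop N, eventually_ge_atTop 1, hSbneg,
    hKtop.eventually (eventually_ge_atTop 1)] with n hn hn1 hSb hK1'
  have hnne : (n : ℝ) ≠ 0 := by positivity
  have hKne : (K n : ℝ) ≠ 0 := by positivity
  have hSbne : Sb n ≠ 0 := ne_of_lt hSb
  rw [Pi.div_apply]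
  field_simp

end Helpers

theorem stmt17 (m : ℕ) (mi : Fin m → ℕ) (mij : (i : Fin m) → Fin (mi i) → ℕ)
    (p : Fin m → ℝ) (hp : ∀ i, 0 < p i) (hpsum : ∑ i, p i = 1)
    (P : (i : Fin m) → Fin (mi i) → ℝ)
    (hP : ∀ i j, 0 ≤ P i j) (hPsum : ∀ i, ∑ j, P i j = p i)
    (b : (i : Fin m) → Fin (mi i) → ℝ)
    (a : (i : Fin m) → (j : Fin (mi i)) → Fin (mij i j) → ℝ)
    (hab : ∀ i j k, 0 < a i j k ∧ a i j k ≤ b i j) (hb : ∀ i j, b i j < 1)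
    (tP : ℝ) (htP : tP ∈ Set.Icc (0 : ℝ) 1)
    (htPeq : ∑ i, ∑ j, P i j * Real.log (∑ k, a i j k ^ tP) = 0)
    (lamP : ℝ)
    (hlamP : lamP = (∑ i, ∑ j, P i j * Real.log (P i j) - ∑ i, p i * Real.log (p i)) /
      (∑ i, ∑ j, P i j * Real.log (b i j)))
    (μ : Measure (ℕ → Alph m mi mij))
    (hcyl : ∀ (n : ℕ) (x : ℕ → Alph m mi mij),
      μ {x' | ∀ l < n, x' l = x l} =
        ENNReal.ofReal (∏ l ∈ Finset.range n,
          P (x l).1 (x l).2.1 *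
            (a (x l).1 (x l).2.1 (x l).2.2 ^ tP / ∑ k, a (x l).1 (x l).2.1 k ^ tP)))
    (L : (ℕ → Alph m mi mij) → ℕ → ℕ) (N : ℕ)
    (hL : ∀ (x : ℕ → Alph m mi mij), ∀ n ≥ N, IsGreatest {k | 1 ≤ k ∧
      (∏ l ∈ Finset.range n, b (x l).1 (x l).2.1) ≤
        ∏ l ∈ Finset.range k, a (x l).1 (x l).2.1 (x l).2.2} (L x n)) :
    ∀ᵐ x ∂μ, Filter.Tendsto (fun n : ℕ =>
      (∑ l ∈ Finset.range n, Real.log (P (x l).1 (x l).2.1 / p (x l).1) +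
        ∑ l ∈ Finset.range (L x n),
          Real.log (a (x l).1 (x l).2.1 (x l).2.2 ^ tP / ∑ k, a (x l).1 (x l).2.1 k ^ tP)) /
        (∑ l ∈ Finset.range n, Real.log (b (x l).1 (x l).2.1)))
      Filter.atTop (nhds (lamP + tP)) := by
  classical
  rcases isEmpty_or_nonempty (Alph m mi mij) with hemp | hne
  · exact ae_of_all μ fun x => (hemp.false (x 0)).elim
  set w : Alph m mi mij → ℝ :=
    fun u => P u.1 u.2.1 * (a u.1 u.2.1 u.2.2 ^ tP / ∑ k, a u.1 u.2.1 k ^ tP) with hwdef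
  have hcylw : ∀ (n : ℕ) (x : ℕ → Alph m mi mij), μ {x' | ∀ l < n, x' l = x l} =
      ENNReal.ofReal (∏ l ∈ Finset.range n, w (x l)) := hcyl
  have hapos : ∀ u : Alph m mi mij, 0 < a u.1 u.2.1 u.2.2 := fun u => (hab _ _ _).1
  have hbpos : ∀ u : Alph m mi mij, 0 < b u.1 u.2.1 :=
    fun u => lt_of_lt_of_le (hapos u) (hab _ _ u.2.2).2
  have hZpos : ∀ u : Alph m mi mij, 0 < ∑ k, a u.1 u.2.1 k ^ tP := fun u =>
    Finset.sum_pos (fun k _ => Real.rpow_pos_of_pos (hab u.1 u.2.1 k).1 tP)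
      ⟨u.2.2, Finset.mem_univ _⟩
  have hw0 : ∀ u, 0 ≤ w u := fun u =>
    mul_nonneg (hP _ _) (div_nonneg (Real.rpow_nonneg (hapos u).le _) (hZpos u).le)
  have hsum1 : ∑ u, w u = 1 := sum1 μ w hw0 hcylw
  -- collapse of sums over the sigma type
  have hColl : ∀ f : Alph m mi mij → ℝ, ∑ u, f u = ∑ i, ∑ j, ∑ k, f ⟨i, j, k⟩ := by
    intro f
    rw [← Finset.univ_sigma_univ, Finset.sum_sigma]
    refine Finset.sum_congr rfl fun i _ => ?_
    rw [← Finset.univ_sigma_univ, Finset.sum_sigma]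
  -- inner sums
  have hle : ∀ (i : Fin m) (j : Fin (mi i)), ∑ k, w ⟨i, j, k⟩ ≤ P i j := by
    intro i j
    rcases Nat.eq_zero_or_pos (mij i j) with h0 | hpos
    · haveI : IsEmpty (Fin (mij i j)) := by rw [h0]; infer_instance
      rw [Finset.univ_eq_empty, Finset.sum_empty]
      exact hP i j
    · have hZ : 0 < ∑ k, a i j k ^ tP :=
        Finset.sum_pos (fun k _ => Real.rpow_pos_of_pos (hab i j k).1 tP)
          ⟨⟨0, hpos⟩, Finset.mem_univ _⟩
      have : ∑ k, w ⟨i, j, k⟩ = P i j := by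
        simp only [hwdef]
        rw [← Finset.mul_sum]
        have e : ∑ k, a i j k ^ tP / ∑ x, a i j x ^ tP = 1 := by
          rw [← Finset.sum_div, div_self hZ.ne']
        change P i j * (∑ k, a i j k ^ tP / ∑ x, a i j x ^ tP) = P i j
        rw [e, mul_one]
      rw [this]
  have hsP : ∀ (i : Fin m) (j : Fin (mi i)), ∑ k, w ⟨i, j, k⟩ = P i j := by
    have h1 : ∑ i, ∑ j, ∑ k, w ⟨i, j, k⟩ = 1 := by rw [← hColl w, hsum1]
    have h2 : ∑ i, ∑ j, P i j = 1 := by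
      rw [Finset.sum_congr rfl fun i (_ : i ∈ Finset.univ) => hPsum i]
      exact hpsum
    by_contra hcon
    push_neg at hcon
    obtain ⟨i0, j0, hne0⟩ := hcon
    have hstrict : ∑ j, ∑ k, w ⟨i0, j, k⟩ < ∑ j, P i0 j :=
      Finset.sum_lt_sum (fun j _ => hle i0 j)
        ⟨j0, Finset.mem_univ _, lt_of_le_of_ne (hle i0 j0) hne0⟩
    have : (1 : ℝ) < 1 := by
      calc (1 : ℝ) = ∑ i, ∑ j, ∑ k, w ⟨i, j, k⟩ := h1.symm
      _ < ∑ i, ∑ j, P i j :=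
        Finset.sum_lt_sum (fun i _ => Finset.sum_le_sum fun j _ => hle i j)
          ⟨i0, Finset.mem_univ _, hstrict⟩
      _ = 1 := h2
    exact absurd this (lt_irrefl 1)
  have hInner : ∀ (i : Fin m) (j : Fin (mi i)) (c : ℝ),
      ∑ k, w ⟨i, j, k⟩ * c = P i j * c := by
    intro i j c
    rw [← Finset.sum_mul, hsP i j]
  -- expectation identities
  have hEb : ∑ u, w u * Real.log (b u.1 u.2.1) = ∑ i, ∑ j, P i j * Real.log (b i j) := by
    rw [hColl]
    exact Finset.sum_congr rfl fun i _ => Finset.sum_congr rfl fun j _ =>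
      hInner i j (Real.log (b i j))
  have hZ0 : ∑ u, w u * Real.log (∑ k, a u.1 u.2.1 k ^ tP) = 0 := by
    rw [hColl]
    refine Eq.trans ?_ htPeq
    exact Finset.sum_congr rfl fun i _ => Finset.sum_congr rfl fun j _ =>
      hInner i j (Real.log (∑ k, a i j k ^ tP))
  have hEf : ∑ u, w u * Real.log (P u.1 u.2.1 / p u.1) =
      ∑ i, ∑ j, P i j * Real.log (P i j) - ∑ i, p i * Real.log (p i) := by
    have step1 : ∑ u, w u * Real.log (P u.1 u.2.1 / p u.1) =
        ∑ i, ∑ j, P i j * Real.log (P i j / p i) := by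
      rw [hColl]
      exact Finset.sum_congr rfl fun i _ => Finset.sum_congr rfl fun j _ =>
        hInner i j (Real.log (P i j / p i))
    have step2 : ∀ (i : Fin m) (j : Fin (mi i)), P i j * Real.log (P i j / p i) =
        P i j * Real.log (P i j) - P i j * Real.log (p i) := by
      intro i j
      rcases eq_or_ne (P i j) 0 with h0 | h0
      · simp [h0]
      · rw [Real.log_div h0 (hp i).ne', mul_sub]
    have step3 : ∑ i, p i * Real.log (p i) = ∑ i, ∑ j, P i j * Real.log (p i) := by
      refine Finset.sum_congr rfl fun i _ => ?_
      rw [← Finset.sum_mul, hPsum i]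
    rw [step1]
    simp_rw [step2, Finset.sum_sub_distrib]
    rw [step3]
  have hEg : ∑ u, w u *
      Real.log (a u.1 u.2.1 u.2.2 ^ tP / ∑ k, a u.1 u.2.1 k ^ tP) =
      tP * ∑ u, w u * Real.log (a u.1 u.2.1 u.2.2) := by
    have hpoint : ∀ u : Alph m mi mij,
        w u * Real.log (a u.1 u.2.1 u.2.2 ^ tP / ∑ k, a u.1 u.2.1 k ^ tP) =
        tP * (w u * Real.log (a u.1 u.2.1 u.2.2)) -
          w u * Real.log (∑ k, a u.1 u.2.1 k ^ tP) := by
      intro u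
      rw [Real.log_div (Real.rpow_pos_of_pos (hapos u) tP).ne' (hZpos u).ne',
        Real.log_rpow (hapos u)]
      ring
    calc ∑ u, w u * Real.log (a u.1 u.2.1 u.2.2 ^ tP / ∑ k, a u.1 u.2.1 k ^ tP)
        = ∑ u, (tP * (w u * Real.log (a u.1 u.2.1 u.2.2)) -
          w u * Real.log (∑ k, a u.1 u.2.1 k ^ tP)) :=
        Finset.sum_congr rfl fun u _ => hpoint u
      _ = tP * ∑ u, w u * Real.log (a u.1 u.2.1 u.2.2) -
          ∑ u, w u * Real.log (∑ k, a u.1 u.2.1 k ^ tP) := by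
        rw [Finset.sum_sub_distrib, Finset.mul_sum]
      _ = tP * ∑ u, w u * Real.log (a u.1 u.2.1 u.2.2) := by rw [hZ0, sub_zero]
  -- negativity
  obtain ⟨u0, hu0⟩ : ∃ u : Alph m mi mij, 0 < w u := by
    by_contra hcon
    push_neg at hcon
    have h := Finset.sum_nonpos (fun u (_ : u ∈ Finset.univ) => hcon u)
    rw [hsum1] at h
    linarith
  have hlogb_neg : ∀ u : Alph m mi mij, Real.log (b u.1 u.2.1) < 0 := fun u =>
    Real.log_neg (hbpos u) (hb _ _)
  have hHneg : ∑ u, w u * Real.log (b u.1 u.2.1) < 0 := by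
    have h := Finset.sum_lt_sum (f := fun u : Alph m mi mij => w u * Real.log (b u.1 u.2.1))
      (g := fun _ => (0 : ℝ))
      (fun u _ => by
        have h2 : w u * Real.log (b u.1 u.2.1) ≤ w u * 0 :=
          mul_le_mul_of_nonneg_left (hlogb_neg u).le (hw0 u)
        simpa using h2)
      ⟨u0, Finset.mem_univ _, mul_neg_of_pos_of_neg hu0 (hlogb_neg u0)⟩
    simpa using h
  have hAneg : ∑ u, w u * Real.log (a u.1 u.2.1 u.2.2) < 0 := by
    have h : ∑ u, w u * Real.log (a u.1 u.2.1 u.2.2) ≤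
        ∑ u, w u * Real.log (b u.1 u.2.1) :=
      Finset.sum_le_sum fun u _ =>
        mul_le_mul_of_nonneg_left (Real.log_le_log (hapos u) (hab _ _ u.2.2).2) (hw0 u)
    exact lt_of_le_of_lt h hHneg
  -- value identity
  have hval : lamP + tP =
      ((∑ u, w u * Real.log (P u.1 u.2.1 / p u.1)) +
        (∑ u, w u * Real.log (a u.1 u.2.1 u.2.2 ^ tP / ∑ k, a u.1 u.2.1 k ^ tP)) *
          ((∑ u, w u * Real.log (b u.1 u.2.1)) / (∑ u, w u * Real.log (a u.1 u.2.1 u.2.2)))) /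
        (∑ u, w u * Real.log (b u.1 u.2.1)) := by
    have hAne : (∑ u, w u * Real.log (a u.1 u.2.1 u.2.2)) ≠ 0 := hAneg.ne
    have hHne : (∑ i, ∑ j, P i j * Real.log (b i j)) ≠ 0 := by
      rw [← hEb]; exact hHneg.ne
    rw [hlamP, hEf, hEb, hEg]
    field_simp
  rw [show nhds (lamP + tP) = nhds (((∑ u, w u * Real.log (P u.1 u.2.1 / p u.1)) +
      (∑ u, w u * Real.log (a u.1 u.2.1 u.2.2 ^ tP / ∑ k, a u.1 u.2.1 k ^ tP)) *
        ((∑ u, w u * Real.log (b u.1 u.2.1)) / (∑ u, w u * Real.log (a u.1 u.2.1 u.2.2)))) /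
      (∑ u, w u * Real.log (b u.1 u.2.1))) from by rw [← hval]]
  have slf := sllnX μ w hw0 hcylw (fun u => Real.log (P u.1 u.2.1 / p u.1))
  have sla := sllnX μ w hw0 hcylw (fun u => Real.log (a u.1 u.2.1 u.2.2))
  have slb := sllnX μ w hw0 hcylw (fun u => Real.log (b u.1 u.2.1))
  have slg := sllnX μ w hw0 hcylw
    (fun u => Real.log (a u.1 u.2.1 u.2.2 ^ tP / ∑ k, a u.1 u.2.1 k ^ tP))
  filter_upwards [slf, sla, slb, slg] with x h1 h2 h3 h4
  -- translate hL into sum form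
  have hprod_iff : ∀ n k : ℕ,
      ((∏ l ∈ Finset.range n, b (x l).1 (x l).2.1) ≤
        ∏ l ∈ Finset.range k, a (x l).1 (x l).2.1 (x l).2.2) ↔
      ((∑ l ∈ Finset.range n, Real.log (b (x l).1 (x l).2.1)) ≤
        ∑ l ∈ Finset.range k, Real.log (a (x l).1 (x l).2.1 (x l).2.2)) := by
    intro n k
    rw [← Real.log_le_log_iff (Finset.prod_pos fun l _ => hbpos (x l))
      (Finset.prod_pos fun l _ => hapos (x l)),
      Real.log_prod (fun l _ => (hbpos (x l)).ne'),
      Real.log_prod (fun l _ => (hapos (x l)).ne')]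
  have hK1 : ∀ n ≥ N, 1 ≤ L x n := fun n hn => (hL x n hn).1.1
  have hK2 : ∀ n ≥ N, (∑ l ∈ Finset.range n, Real.log (b (x l).1 (x l).2.1)) ≤
      ∑ l ∈ Finset.range (L x n), Real.log (a (x l).1 (x l).2.1 (x l).2.2) :=
    fun n hn => (hprod_iff n (L x n)).1 (hL x n hn).1.2
  have hK3 : ∀ n ≥ N, ∀ k, 1 ≤ k →
      ((∑ l ∈ Finset.range n, Real.log (b (x l).1 (x l).2.1)) ≤
        ∑ l ∈ Finset.range k, Real.log (a (x l).1 (x l).2.1 (x l).2.2)) → k ≤ L x n :=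
    fun n hn k hk hsum => (hL x n hn).2 ⟨hk, (hprod_iff n k).2 hsum⟩
  exact det
    (fun n => ∑ l ∈ Finset.range n, Real.log (P (x l).1 (x l).2.1 / p (x l).1))
    (fun k => ∑ l ∈ Finset.range k, Real.log (a (x l).1 (x l).2.1 (x l).2.2))
    (fun n => ∑ l ∈ Finset.range n, Real.log (b (x l).1 (x l).2.1))
    (fun k => ∑ l ∈ Finset.range k,
      Real.log (a (x l).1 (x l).2.1 (x l).2.2 ^ tP / ∑ k', a (x l).1 (x l).2.1 k' ^ tP))
    (L x) N _ _ _ _ hAneg hHneg h1 h2 h3 h4 hK1 hK2 hK3
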